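/- (Bounded Weyl–Minkowski / polytopes are bounded polyhedra.) A set P ⊆ ℝⁿ is the convex hull of some nonempty finite set V ⊆ ℝⁿ if and only if P is nonempty, bounded, and there exist m ∈ ℕ, a real m×n matrix A and b ∈ ℝ^m such that P = {x ∈ ℝⁿ : A·x ≤ b}. -/

import Mathlib

open Matrix Set

/-- `S` is a polyhedron in `ℝⁿ`. -/
def PolyR (n : ℕ) (S : Set (Fin n → ℝ)) : Prop :=
  ∃ (m : ℕ) (A : Matrix (Fin m) (Fin n) ℝ) (b : Fin m → ℝ),
    S = {x : Fin n → ℝ | ∀ i, A.mulVec x i ≤ b i}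

lemma isPoly_of_fintype {n : ℕ} {ι : Type} [Fintype ι] (A : ι → (Fin n → ℝ)) (b : ι → ℝ) :
    PolyR n {x | ∀ i, A i ⬝ᵥ x ≤ b i} := by
  classical
  let e := Fintype.equivFin ι
  refine ⟨Fintype.card ι, Matrix.of (fun k => A (e.symm k)), fun k => b (e.symm k), ?_⟩
  ext x
  simp only [mem_setOf_eq, Matrix.mulVec, Matrix.of_apply]
  constructor
  · intro h k; exact h (e.symm k)
  · intro h i; simpa using h (e i)

lemma dot_snoc {n : ℕ} (u : Fin (n+1) → ℝ) (y : Fin n → ℝ) (t : ℝ) :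
    u ⬝ᵥ Fin.snoc y t = (fun j => u (Fin.castSucc j)) ⬝ᵥ y + u (Fin.last n) * t := by
  simp [dotProduct, Fin.sum_univ_castSucc]

lemma fm_step {n : ℕ} {ι : Type} [Fintype ι] (A : ι → (Fin (n+1) → ℝ)) (b : ι → ℝ) :
    PolyR n {y : Fin n → ℝ | ∃ t, ∀ i, A i ⬝ᵥ (Fin.snoc y t) ≤ b i} := by
  classical
  set a : ι → Fin n → ℝ := fun i j => A i (Fin.castSucc j) with ha
  set c : ι → ℝ := fun i => A i (Fin.last n) with hc
  have hdot : ∀ (i : ι) (y : Fin n → ℝ) (t : ℝ),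
      A i ⬝ᵥ Fin.snoc y t = a i ⬝ᵥ y + c i * t := fun i y t => dot_snoc (A i) y t
  set A' : (ι ⊕ ι × ι) → (Fin n → ℝ) := fun k =>
    Sum.rec (fun i => if c i = 0 then a i else 0)
      (fun p => if 0 < c p.1 ∧ c p.2 < 0 then (-(c p.2)) • a p.1 + (c p.1) • a p.2 else 0) k
    with hA'
  set b' : (ι ⊕ ι × ι) → ℝ := fun k =>
    Sum.rec (fun i => if c i = 0 then b i else 0)
      (fun p => if 0 < c p.1 ∧ c p.2 < 0 then (-(c p.2)) * b p.1 + (c p.1) * b p.2 else 0) k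
    with hb'
  have key : {y : Fin n → ℝ | ∃ t, ∀ i, A i ⬝ᵥ (Fin.snoc y t) ≤ b i}
      = {y | ∀ k, A' k ⬝ᵥ y ≤ b' k} := by
    ext y
    simp only [mem_setOf_eq]
    constructor
    · rintro ⟨t, ht⟩ k
      have ht' : ∀ i, a i ⬝ᵥ y + c i * t ≤ b i := fun i => (hdot i y t) ▸ ht i
      rcases k with i | ⟨i, j⟩
      · by_cases h : c i = 0
        · simp only [hA', hb', if_pos h]
          have := ht' i
          rw [h] at this; linarith
        · simp [hA', hb', if_neg h]
      · by_cases h : 0 < c i ∧ c j < 0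
        · simp only [hA', hb', if_pos h]
          have h1 : (-(c j)) * (a i ⬝ᵥ y + c i * t) ≤ (-(c j)) * b i :=
            mul_le_mul_of_nonneg_left (ht' i) (by linarith [h.2])
          have h2 : (c i) * (a j ⬝ᵥ y + c j * t) ≤ (c i) * b j :=
            mul_le_mul_of_nonneg_left (ht' j) h.1.le
          rw [add_dotProduct, smul_dotProduct, smul_dotProduct, smul_eq_mul, smul_eq_mul]
          nlinarith [h1, h2]
        · simp [hA', hb', if_neg h]
    · intro hy
      suffices h : ∃ t, ∀ i, a i ⬝ᵥ y + c i * t ≤ b i by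
        obtain ⟨t, ht⟩ := h
        exact ⟨t, fun i => (hdot i y t) ▸ ht i⟩
      have h0 : ∀ i, c i = 0 → a i ⬝ᵥ y ≤ b i := by
        intro i hi
        have := hy (Sum.inl i)
        simpa only [hA', hb', if_pos hi] using this
      have hpair : ∀ i j, 0 < c i → c j < 0 →
          (-(c j)) * (a i ⬝ᵥ y) + (c i) * (a j ⬝ᵥ y) ≤ (-(c j)) * b i + (c i) * b j := by
        intro i j hi hj
        have hcond : 0 < c i ∧ c j < 0 := ⟨hi, hj⟩
        have := hy (Sum.inr (i, j))
        simpa only [hA', hb', if_pos hcond, add_dotProduct, smul_dotProduct,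
          smul_eq_mul] using this
      -- choose t
      set Lo : Finset ι := Finset.univ.filter (fun j => c j < 0) with hLodef
      set Up : Finset ι := Finset.univ.filter (fun i => 0 < c i) with hUpdef
      have memLo : ∀ j, j ∈ Lo ↔ c j < 0 := by intro j; simp [hLodef]
      have memUp : ∀ i, i ∈ Up ↔ 0 < c i := by intro i; simp [hUpdef]
      set r : ι → ℝ := fun i => (b i - a i ⬝ᵥ y) / c i with hr
      have lower_ok : ∀ i, c i < 0 → ∀ t, r i ≤ t → a i ⬝ᵥ y + c i * t ≤ b i := by
        intro i hi t hti
        have h2 : c i * t ≤ c i * r i := mul_le_mul_of_nonpos_left hti hi.le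
        have h3 : c i * r i = b i - a i ⬝ᵥ y := by
          simp only [hr]; rw [mul_div_cancel₀ _ (ne_of_lt hi)]
        linarith
      have upper_ok : ∀ i, 0 < c i → ∀ t, t ≤ r i → a i ⬝ᵥ y + c i * t ≤ b i := by
        intro i hi t hti
        have h2 : c i * t ≤ c i * r i := mul_le_mul_of_nonneg_left hti hi.le
        have h3 : c i * r i = b i - a i ⬝ᵥ y := by
          simp only [hr]; rw [mul_div_cancel₀ _ (ne_of_gt hi)]
        linarith
      have lb_le_ub : ∀ i, 0 < c i → ∀ j, c j < 0 → r j ≤ r i := by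
        intro i hi j hj
        have hp := hpair i j hi hj
        simp only [hr]
        rw [show (b j - a j ⬝ᵥ y) / c j = (-(b j - a j ⬝ᵥ y)) / (-(c j)) by
          rw [neg_div_neg_eq]]
        rw [div_le_div_iff₀ (by linarith) hi]
        nlinarith [hp]
      by_cases hLo : Lo.Nonempty
      · refine ⟨Lo.sup' hLo r, ?_⟩
        intro i
        rcases lt_trichotomy (c i) 0 with h | h | h
        · exact lower_ok i h _ (Finset.le_sup' r ((memLo i).2 h))
        · rw [h]; simpa using h0 i h
        · exact upper_ok i h _
            (Finset.sup'_le hLo r fun j hj => lb_le_ub i h j ((memLo j).1 hj))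
      · by_cases hUp : Up.Nonempty
        · refine ⟨Up.inf' hUp r, ?_⟩
          intro i
          rcases lt_trichotomy (c i) 0 with h | h | h
          · exact absurd ((memLo i).2 h) (fun hh => hLo ⟨i, hh⟩)
          · rw [h]; simpa using h0 i h
          · exact upper_ok i h _ (Finset.inf'_le r ((memUp i).2 h))
        · refine ⟨0, ?_⟩
          intro i
          rcases lt_trichotomy (c i) 0 with h | h | h
          · exact absurd ((memLo i).2 h) (fun hh => hLo ⟨i, hh⟩)
          · rw [h]; simpa using h0 i h
          · exact absurd ((memUp i).2 h) (fun hh => hUp ⟨i, hh⟩)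
  rw [key]
  exact isPoly_of_fintype A' b'

lemma polyR_snoc {n : ℕ} (S : Set (Fin (n+1) → ℝ)) (h : PolyR (n+1) S) :
    PolyR n {y | ∃ t, Fin.snoc y t ∈ S} := by
  obtain ⟨m, A, b, rfl⟩ := h
  have : {y : Fin n → ℝ | ∃ t, Fin.snoc y t ∈ {x | ∀ i, A.mulVec x i ≤ b i}}
      = {y | ∃ t, ∀ i, (fun i => A i) i ⬝ᵥ (Fin.snoc y t) ≤ b i} := rfl
  rw [this]
  exact fm_step (fun i => A i) b

lemma polyR_exists {n : ℕ} : ∀ (N : ℕ) (S : Set (Fin (n + N) → ℝ)), PolyR (n + N) S →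
    PolyR n {y | ∃ z : Fin N → ℝ, Fin.append y z ∈ S} := by
  intro N
  induction N with
  | zero =>
    intro S hS
    have : {y : Fin n → ℝ | ∃ z : Fin 0 → ℝ, Fin.append y z ∈ S} = S := by
      ext y
      constructor
      · rintro ⟨z, hz⟩
        have hz0 : z = Fin.elim0 := Subsingleton.elim _ _
        rw [hz0, Fin.append_elim0] at hz
        exact hz
      · intro hy
        refine ⟨Fin.elim0, ?_⟩
        rw [Fin.append_elim0]
        exact hy
    rw [this]; exact hS
  | succ N ih =>
    intro S hS
    have hT : PolyR (n + N) {w : Fin (n + N) → ℝ | ∃ t, Fin.snoc w t ∈ S} :=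
      polyR_snoc S hS
    have := ih _ hT
    have hset : {y : Fin n → ℝ | ∃ z : Fin N → ℝ, Fin.append y z ∈
        {w : Fin (n + N) → ℝ | ∃ t, Fin.snoc w t ∈ S}}
        = {y | ∃ z : Fin (N+1) → ℝ, Fin.append y z ∈ S} := by
      ext y
      constructor
      · rintro ⟨z, t, hzt⟩
        refine ⟨Fin.snoc z t, ?_⟩
        rwa [Fin.append_snoc]
      · rintro ⟨z, hz⟩
        refine ⟨Fin.init z, z (Fin.last N), ?_⟩
        rw [← Fin.append_snoc, Fin.snoc_init_self]
        exact hz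
    rwa [hset] at this

lemma convexHull_range_fin {E : Type*} [AddCommGroup E] [Module ℝ E] {N : ℕ} (v : Fin N → E) :
    convexHull ℝ (Set.range v) =
      {x | ∃ w : Fin N → ℝ, (∀ k, 0 ≤ w k) ∧ (∑ k, w k) = 1 ∧ (∑ k, w k • v k) = x} := by
  classical
  apply Subset.antisymm
  · apply convexHull_min
    · rintro x ⟨k0, rfl⟩
      refine ⟨fun k => if k = k0 then 1 else 0, ?_, ?_, ?_⟩
      · intro k; dsimp only; split <;> norm_num
      · simp
      · simp [ite_smul]
    · rintro x ⟨wx, hwx0, hwx1, rfl⟩ y ⟨wy, hwy0, hwy1, rfl⟩ p q hp hq hpq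
      refine ⟨fun k => p * wx k + q * wy k, ?_, ?_, ?_⟩
      · intro k; have := hwx0 k; have := hwy0 k; positivity
      · rw [Finset.sum_add_distrib, ← Finset.mul_sum, ← Finset.mul_sum, hwx1, hwy1]
        simpa using hpq
      · simp only [add_smul, mul_smul, Finset.sum_add_distrib, ← Finset.smul_sum]
  · rintro x ⟨w, hw0, hw1, hx⟩
    exact mem_convexHull_of_exists_fintype w v hw0 hw1 (fun k => mem_range_self k) hx

lemma dot_append {n N : ℕ} (u : Fin n → ℝ) (z : Fin N → ℝ) (y : Fin n → ℝ) (l : Fin N → ℝ) :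
    Fin.append u z ⬝ᵥ Fin.append y l = u ⬝ᵥ y + z ⬝ᵥ l := by
  simp [dotProduct, Fin.sum_univ_add]

lemma weyl {n : ℕ} (V : Finset (Fin n → ℝ)) :
    PolyR n (convexHull ℝ (V : Set (Fin n → ℝ))) := by
  classical
  set N := V.card with hN
  set v : Fin N → (Fin n → ℝ) := fun k => (V.equivFin.symm k : Fin n → ℝ) with hv
  have hrange : Set.range v = (V : Set (Fin n → ℝ)) := by
    ext x
    constructor
    · rintro ⟨k, rfl⟩; exact (V.equivFin.symm k).2
    · intro hx
      exact ⟨V.equivFin ⟨x, hx⟩, by simp [hv]⟩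
  -- index type for the constraints
  let ι : Type := Fin N ⊕ (Fin n ⊕ Fin n) ⊕ (Unit ⊕ Unit)
  let R : ι → (Fin (n + N) → ℝ) :=
    Sum.elim (fun k => Fin.append 0 (-(Pi.single k 1)))
      (Sum.elim
        (Sum.elim (fun j => Fin.append (Pi.single j 1) (fun k => -(v k j)))
          (fun j => Fin.append (-(Pi.single j 1)) (fun k => v k j)))
        (Sum.elim (fun _ => Fin.append 0 1) (fun _ => Fin.append 0 (-1))))
  let bb : ι → ℝ :=
    Sum.elim (fun _ => 0)
      (Sum.elim (Sum.elim (fun _ => 0) (fun _ => 0))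
        (Sum.elim (fun _ => 1) (fun _ => -1)))
  have hpoly : PolyR (n + N) {w | ∀ i, R i ⬝ᵥ w ≤ bb i} := isPoly_of_fintype R bb
  have dC : ∀ (k : Fin N) (y : Fin n → ℝ) (z : Fin N → ℝ),
      Fin.append (0 : Fin n → ℝ) (-(Pi.single k 1)) ⬝ᵥ Fin.append y z = -z k := by
    intro k y z
    rw [dot_append, zero_dotProduct, neg_dotProduct, single_dotProduct, one_mul, zero_add]
  have dA : ∀ (j : Fin n) (y : Fin n → ℝ) (z : Fin N → ℝ),
      Fin.append (Pi.single j (1:ℝ)) (fun k => -(v k j)) ⬝ᵥ Fin.append y z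
        = y j - ∑ k, z k * v k j := by
    intro j y z
    rw [dot_append, single_dotProduct, one_mul]
    have : (fun k => -(v k j)) ⬝ᵥ z = -∑ k, z k * v k j := by
      simp [dotProduct, mul_comm]
    rw [this]; ring
  have dB : ∀ (j : Fin n) (y : Fin n → ℝ) (z : Fin N → ℝ),
      Fin.append (-(Pi.single j (1:ℝ))) (fun k => v k j) ⬝ᵥ Fin.append y z
        = (∑ k, z k * v k j) - y j := by
    intro j y z
    rw [dot_append, neg_dotProduct, single_dotProduct, one_mul]
    have : (fun k => v k j) ⬝ᵥ z = ∑ k, z k * v k j := by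
      simp [dotProduct, mul_comm]
    rw [this]; ring
  have dD : ∀ (y : Fin n → ℝ) (z : Fin N → ℝ),
      Fin.append (0 : Fin n → ℝ) (1 : Fin N → ℝ) ⬝ᵥ Fin.append y z = ∑ k, z k := by
    intro y z
    rw [dot_append, zero_dotProduct, one_dotProduct, zero_add]
  have dE : ∀ (y : Fin n → ℝ) (z : Fin N → ℝ),
      Fin.append (0 : Fin n → ℝ) (-1 : Fin N → ℝ) ⬝ᵥ Fin.append y z = -∑ k, z k := by
    intro y z
    rw [dot_append, zero_dotProduct, neg_dotProduct, one_dotProduct, zero_add]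
  have hcoord : ∀ (z : Fin N → ℝ) (j : Fin n), (∑ k, z k • v k) j = ∑ k, z k * v k j := by
    intro z j; simp
  have hmem : ∀ (y : Fin n → ℝ) (z : Fin N → ℝ),
      (∀ i, R i ⬝ᵥ Fin.append y z ≤ bb i) ↔
        ((∀ k, 0 ≤ z k) ∧ (∑ k, z k) = 1 ∧ (∑ k, z k • v k) = y) := by
    intro y z
    constructor
    · intro h
      refine ⟨?_, ?_, ?_⟩
      · intro k
        have := h (Sum.inl k)
        simp only [R, bb, Sum.elim_inl] at this
        rw [dC] at this
        linarith
      · have h1 := h (Sum.inr (Sum.inr (Sum.inl ())))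
        have h2 := h (Sum.inr (Sum.inr (Sum.inr ())))
        simp only [R, bb, Sum.elim_inr, Sum.elim_inl] at h1 h2
        rw [dD] at h1; rw [dE] at h2
        linarith
      · funext j
        have h1 := h (Sum.inr (Sum.inl (Sum.inl j)))
        have h2 := h (Sum.inr (Sum.inl (Sum.inr j)))
        simp only [R, bb, Sum.elim_inr, Sum.elim_inl] at h1 h2
        rw [dA] at h1; rw [dB] at h2
        rw [hcoord z j]
        linarith
    · rintro ⟨hz0, hz1, hzy⟩ i
      have hzy' : ∀ j, ∑ k, z k * v k j = y j := by
        intro j; rw [← hcoord z j, hzy]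
      rcases i with k | ((j | j) | (u | u)) <;>
        simp only [R, bb, Sum.elim_inl, Sum.elim_inr]
      · rw [dC]; linarith [hz0 k]
      · rw [dA]; rw [hzy' j]; linarith
      · rw [dB]; rw [hzy' j]; linarith
      · rw [dD]; linarith [hz1.le]
      · rw [dE]; linarith [hz1.ge]
  have hset : {y | ∃ z : Fin N → ℝ, Fin.append y z ∈ {w | ∀ i, R i ⬝ᵥ w ≤ bb i}}
      = convexHull ℝ (V : Set (Fin n → ℝ)) := by
    rw [← hrange, convexHull_range_fin]
    ext y
    simp only [mem_setOf_eq]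
    constructor
    · rintro ⟨z, hz⟩
      obtain ⟨h1, h2, h3⟩ := (hmem y z).1 hz
      exact ⟨z, h1, h2, h3⟩
    · rintro ⟨w, h1, h2, h3⟩
      exact ⟨w, (hmem y w).2 ⟨h1, h2, h3⟩⟩
  rw [← hset]
  exact polyR_exists N _ hpoly

lemma extreme_finite {n m : ℕ} (A : Matrix (Fin m) (Fin n) ℝ) (b : Fin m → ℝ) :
    (Set.extremePoints ℝ {x : Fin n → ℝ | ∀ i, A.mulVec x i ≤ b i}).Finite := by
  classical
  set P := {x : Fin n → ℝ | ∀ i, A.mulVec x i ≤ b i} with hP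
  set I : (Fin n → ℝ) → Finset (Fin m) :=
    fun x => Finset.univ.filter (fun i => A.mulVec x i = b i) with hI
  have key : ∀ x ∈ P.extremePoints ℝ, ∀ d : Fin n → ℝ,
      (∀ i ∈ I x, A.mulVec d i = 0) → d = 0 := by
    intro x hx d hd
    by_contra hd0
    obtain ⟨hxP, hxe⟩ := hx
    set J : Finset (Fin m) := Finset.univ.filter (fun i => i ∉ I x) with hJdef
    have hslack : ∀ i ∈ J, 0 < b i - A.mulVec x i := by
      intro i hi
      have h1 : A.mulVec x i ≤ b i := hxP i
      have h2 : A.mulVec x i ≠ b i := by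
        intro hcon
        have : i ∈ I x := by simp [hI, hcon]
        simp only [hJdef, Finset.mem_filter, Finset.mem_univ, true_and] at hi
        exact hi this
      have := lt_of_le_of_ne h1 h2
      linarith
    set f : Fin m → ℝ := fun i => (b i - A.mulVec x i) / (|A.mulVec d i| + 1) with hf
    have hfpos : ∀ i ∈ J, 0 < f i := by
      intro i hi
      have h1 := hslack i hi
      have h2 : (0:ℝ) < |A.mulVec d i| + 1 := by positivity
      simp only [hf]
      positivity
    have hmain : ∃ ε : ℝ, 0 < ε ∧ ∀ i ∈ J, ε * |A.mulVec d i| < b i - A.mulVec x i := by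
      by_cases hJ : J.Nonempty
      · refine ⟨J.inf' hJ f, ?_, ?_⟩
        · obtain ⟨i0, hi0, hval⟩ := Finset.exists_mem_eq_inf' hJ f
          rw [hval]; exact hfpos i0 hi0
        · intro i hi
          have hle : J.inf' hJ f ≤ f i := Finset.inf'_le f hi
          have hεpos : 0 < J.inf' hJ f := by
            obtain ⟨i0, hi0, hval⟩ := Finset.exists_mem_eq_inf' hJ f
            rw [hval]; exact hfpos i0 hi0
          have habs : (0:ℝ) ≤ |A.mulVec d i| := abs_nonneg _
          have hfi : f i * (|A.mulVec d i| + 1) = b i - A.mulVec x i := by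
            simp only [hf]
            rw [div_mul_cancel₀]
            positivity
          have hfip : 0 < f i := hfpos i hi
          nlinarith [mul_le_mul_of_nonneg_right hle habs]
      · exact ⟨1, one_pos, fun i hi => absurd ⟨i, hi⟩ hJ⟩
    obtain ⟨ε, hε, hεs⟩ := hmain
    have hmv : ∀ (s : ℝ) (i : Fin m), A.mulVec (x + s • d) i = A.mulVec x i + s * A.mulVec d i := by
      intro s i
      rw [Matrix.mulVec_add, Matrix.mulVec_smul]
      simp
    have hmem : ∀ s : ℝ, |s| ≤ ε → x + s • d ∈ P := by
      intro s hs i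
      rw [hmv]
      by_cases hiI : i ∈ I x
      · rw [hd i hiI, mul_zero, add_zero]
        exact hxP i
      · have hiJ : i ∈ J := by simp [hJdef, hiI]
        have h1 : s * A.mulVec d i ≤ |s| * |A.mulVec d i| := by
          calc s * A.mulVec d i ≤ |s * A.mulVec d i| := le_abs_self _
          _ = |s| * |A.mulVec d i| := abs_mul _ _
        have h2 : |s| * |A.mulVec d i| ≤ ε * |A.mulVec d i| :=
          mul_le_mul_of_nonneg_right hs (abs_nonneg _)
        have h3 := hεs i hiJ
        linarith
    have hp1 : x + ε • d ∈ P := hmem ε (by rw [abs_of_pos hε])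
    have hp2 : x + (-ε) • d ∈ P := hmem (-ε) (by rw [abs_neg, abs_of_pos hε])
    have hseg : x ∈ openSegment ℝ (x + (-ε) • d) (x + ε • d) := by
      refine ⟨1/2, 1/2, by norm_num, by norm_num, by norm_num, ?_⟩
      module
    have heq := hxe hp2 hp1 hseg
    have : (-ε) • d = 0 := by
      have := congrArg (fun w => w - x) heq
      simpa [add_sub_cancel_left] using this
    rcases smul_eq_zero.1 this with h | h
    · exact absurd h (by simpa using ne_of_gt hε)
    · exact hd0 h
  have inj : Set.InjOn I (P.extremePoints ℝ) := by
    intro x hx y hy hxy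
    have hIx : ∀ i ∈ I x, A.mulVec x i = b i := by
      intro i hi; simpa [hI] using hi
    have hIy : ∀ i ∈ I y, A.mulVec y i = b i := by
      intro i hi; simpa [hI] using hi
    have hd : ∀ i ∈ I x, A.mulVec (x - y) i = 0 := by
      intro i hi
      rw [Matrix.mulVec_sub]
      have h1 := hIx i hi
      have h2 := hIy i (hxy ▸ hi)
      simp only [Pi.sub_apply]
      rw [h1, h2, sub_self]
    have := key x hx (x - y) hd
    exact sub_eq_zero.1 this
  exact Set.Finite.of_finite_image (Set.toFinite _) inj

/-- Bounded Weyl–Minkowski: `P ⊆ ℝⁿ` is the convex hull of a nonempty finite set iff `P` is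
nonempty, bounded, and is a polyhedron `{x : A·x ≤ b}` for some matrix `A` and vector `b`. -/
theorem stmt4 (n : ℕ) (P : Set (Fin n → ℝ)) :
    (∃ V : Finset (Fin n → ℝ), V.Nonempty ∧ P = convexHull ℝ (V : Set (Fin n → ℝ))) ↔
    (P.Nonempty ∧ Bornology.IsBounded P ∧
      ∃ (m : ℕ) (A : Matrix (Fin m) (Fin n) ℝ) (b : Fin m → ℝ),
        P = {x : Fin n → ℝ | ∀ i, A.mulVec x i ≤ b i}) := by
  constructor
  · rintro ⟨V, hVne, rfl⟩
    refine ⟨?_, ?_, ?_⟩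
    · obtain ⟨v, hv⟩ := hVne
      exact ⟨v, subset_convexHull ℝ _ (by exact_mod_cast hv)⟩
    · exact (V.finite_toSet.isCompact_convexHull (𝕜 := ℝ)).isBounded
    · exact weyl V
  · rintro ⟨hne, hbd, m, A, b, rfl⟩
    set P := {x : Fin n → ℝ | ∀ i, A.mulVec x i ≤ b i} with hP
    have hconv : Convex ℝ P := by
      intro x hx y hy p q hp hq hpq i
      have heq : A.mulVec (p • x + q • y) i = p * A.mulVec x i + q * A.mulVec y i := by
        rw [Matrix.mulVec_add, Matrix.mulVec_smul, Matrix.mulVec_smul]; simp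
      rw [mem_setOf_eq] at hx hy
      calc A.mulVec (p • x + q • y) i = p * A.mulVec x i + q * A.mulVec y i := heq
        _ ≤ p * b i + q * b i :=
            add_le_add (mul_le_mul_of_nonneg_left (hx i) hp)
              (mul_le_mul_of_nonneg_left (hy i) hq)
        _ = b i := by rw [← add_mul, hpq, one_mul]
    have hcl : IsClosed P := by
      have hcont : Continuous (fun x : Fin n → ℝ => A.mulVec x) :=
        A.mulVecLin.continuous_of_finiteDimensional
      have hiff : P = ⋂ i, (fun x : Fin n → ℝ => A.mulVec x i) ⁻¹' Iic (b i) := by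
        ext x; simp [hP, mem_iInter]
      rw [hiff]
      exact isClosed_iInter fun i =>
        IsClosed.preimage ((continuous_apply i).comp hcont) isClosed_Iic
    have hcomp : IsCompact P := Metric.isCompact_of_isClosed_isBounded hcl hbd
    have hKM := closure_convexHull_extremePoints hcomp hconv
    have hEfin : (P.extremePoints ℝ).Finite := extreme_finite A b
    have hclosed2 : IsClosed (convexHull ℝ (P.extremePoints ℝ)) :=
      (hEfin.isCompact_convexHull (𝕜 := ℝ)).isClosed
    have hPeq : P = convexHull ℝ (P.extremePoints ℝ) := by
      conv_lhs => rw [← hKM]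
      rw [hclosed2.closure_eq]
    have hEne : (P.extremePoints ℝ).Nonempty := hcomp.extremePoints_nonempty hne
    refine ⟨hEfin.toFinset, ?_, ?_⟩
    · obtain ⟨x, hx⟩ := hEne; exact ⟨x, hEfin.mem_toFinset.2 hx⟩
    · rw [hEfin.coe_toFinset]; exact hPeq
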